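/- Fix the shared-seed coordinated sampling setup and a function f : V → ℝ_{≥0} satisfying lim_{u→0⁺} f̲^{(v)}(u) = f(v) for every v ∈ V. Then every partially specified estimator can be extended to a nonnegative unbiased estimator of f. That is, if f̂ is nonnegative and defined on a set of outcomes closed under the containment order of consistent sets (for every v there is ρ_v ∈ [0,1] with f̂(u,v) defined for a.e. u > ρ_v and undefined for a.e. u ≤ ρ_v) and satisfies ∫_{ρ_v}^1 f̂(u,v) du ≤ f(v) whenever ρ_v > 0 and ∫_0^1 f̂(u,v) du = f(v) whenever ρ_v = 0, then there is a nonnegative unbiased estimator of f agreeing with f̂ wherever f̂ is defined. -/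

import Mathlib

open MeasureTheory Set Filter Topology

noncomputable section

/-- A shared-seed coordinated sampling scheme on a data domain `V ⊆ ℝ_{≥0}^r`:
continuous non-decreasing seed-to-threshold maps `τ i : [0,1] → ℝ` whose range
infimum is at most the infimum of the `i`-th coordinate over the domain. -/
structure CoordScheme (r : ℕ) where
  V : Set (Fin r → ℝ)
  τ : Fin r → ℝ → ℝ
  V_nonneg : ∀ v ∈ V, ∀ i, 0 ≤ v i
  τ_cont : ∀ i, ContinuousOn (τ i) (Set.Icc 0 1)
  τ_mono : ∀ i, MonotoneOn (τ i) (Set.Icc 0 1)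
  τ_inf : ∀ i, sInf (τ i '' Set.Icc 0 1) ≤ sInf ((fun v => v i) '' V)

namespace CoordScheme

variable {r : ℕ}

/-- The set `S(u,v)` of sampled entries: `i` is sampled iff `v i ≥ τ i u`. -/
def sampled (C : CoordScheme r) (u : ℝ) (v : Fin r → ℝ) : Set (Fin r) :=
  {i | C.τ i u ≤ v i}

/-- The consistent set `V*(u,v)` of data vectors consistent with the outcome `S(u,v)`. -/
def Vstar (C : CoordScheme r) (u : ℝ) (v : Fin r → ℝ) : Set (Fin r → ℝ) :=
  {z ∈ C.V | ∀ i, (C.τ i u ≤ v i → z i = v i) ∧ (v i < C.τ i u → z i < C.τ i u)}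

/-- The lower bound function `f̲(u,v) = inf { f z : z ∈ V*(u,v) }`. -/
def lb (C : CoordScheme r) (f : (Fin r → ℝ) → ℝ) (u : ℝ) (v : Fin r → ℝ) : ℝ :=
  sInf (f '' C.Vstar u v)

/-- An estimator: an integrable function of the outcome (it takes equal values on
data vectors consistent with the same outcome). -/
structure IsEstimator (C : CoordScheme r) (fhat : ℝ → (Fin r → ℝ) → ℝ) : Prop where
  integrable : ∀ v ∈ C.V, IntegrableOn (fun u => fhat u v) (Set.Ioc (0:ℝ) 1)
  consistent : ∀ u ∈ Set.Ioc (0:ℝ) 1, ∀ v ∈ C.V, ∀ z ∈ C.Vstar u v, fhat u v = fhat u z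

/-- A nonnegative estimator. -/
def Nonneg (C : CoordScheme r) (fhat : ℝ → (Fin r → ℝ) → ℝ) : Prop :=
  ∀ u ∈ Set.Ioc (0:ℝ) 1, ∀ v ∈ C.V, 0 ≤ fhat u v

/-- An unbiased estimator of `f`. -/
def Unbiased (C : CoordScheme r) (f : (Fin r → ℝ) → ℝ)
    (fhat : ℝ → (Fin r → ℝ) → ℝ) : Prop :=
  ∀ v ∈ C.V, (∫ u in Set.Ioc (0:ℝ) 1, fhat u v) = f v

end CoordScheme

/-- Lower convex hull of `g` on `(0,1]`: the pointwise largest convex function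
bounded above by `g` there. -/
def lowerHull (g : ℝ → ℝ) (u : ℝ) : ℝ :=
  sSup {y : ℝ | ∃ h : ℝ → ℝ, ConvexOn ℝ (Set.Ioc (0:ℝ) 1) h ∧
      (∀ x ∈ Set.Ioc (0:ℝ) 1, h x ≤ g x) ∧ y = h u}

namespace CoordScheme

variable {r : ℕ}

/-- The `v`-optimal estimates: the negated derivative of the lower hull of the
lower-bound function `u ↦ f̲(u,v)`. -/
def optEst (C : CoordScheme r) (f : (Fin r → ℝ) → ℝ) (v : Fin r → ℝ) (u : ℝ) : ℝ :=
  -deriv (lowerHull (fun x => C.lb f x v)) u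

/-- Cumulative integral `∫_{2^{-j}}^1` of the J estimator (by its defining recursion):
`Jint (j+1) = Jint j + (value on `(2^{-j-1},2^{-j}]`) ⬝ 2^{-j-1}`. -/
def Jint (C : CoordScheme r) (f : (Fin r → ℝ) → ℝ) (v : Fin r → ℝ) : ℕ → ℝ
  | 0 => 0
  | (j+1) => Jint C f v j +
      ((2:ℝ) ^ (j+1) * (C.lb f ((2:ℝ) ^ (-(j:ℤ))) v - Jint C f v j)) * (2:ℝ) ^ (-(j:ℤ) - 1)

/-- The (constant) value of the J estimator on the dyadic interval `(2^{-j-1}, 2^{-j}]`.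
For `j = 0` this is `2 ⬝ f̲(1,v)`; for `j ≥ 1` it is
`2^{j+1} ⬝ ( f̲(2^{-j},v) − ∫_{2^{-j}}^1 f̂⁽ᴶ⁾(x,v) dx )`. -/
def Jval (C : CoordScheme r) (f : (Fin r → ℝ) → ℝ) (v : Fin r → ℝ) (j : ℕ) : ℝ :=
  (2:ℝ) ^ (j+1) * (C.lb f ((2:ℝ) ^ (-(j:ℤ))) v - Jint C f v j)

/-- The J estimator `f̂⁽ᴶ⁾(u,v)`: on `u ∈ (2^{-j-1}, 2^{-j}]` it takes the value `Jval j`. -/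
def Jest (C : CoordScheme r) (f : (Fin r → ℝ) → ℝ) (u : ℝ) (v : Fin r → ℝ) : ℝ :=
  C.Jval f v ⌊-Real.logb 2 u⌋₊

end CoordScheme

/-- A partially specified (nonnegative) estimator: values `est u v` are specified
exactly on outcomes with seed `u > bnd v`, the set of specified outcomes is closed
under the containment order (well defined per outcome), the specified values are
nonnegative, consistent across data vectors with the same outcome, integrable, and
satisfy `∫_{ρ_v}^1 est ≤ f v` when `ρ_v > 0` and `∫_0^1 est = f v` when `ρ_v = 0`. -/
structure PartialSpec {r : ℕ} (C : CoordScheme r) (f : (Fin r → ℝ) → ℝ) where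
  est : ℝ → (Fin r → ℝ) → ℝ
  bnd : (Fin r → ℝ) → ℝ
  bnd_mem : ∀ v ∈ C.V, bnd v ∈ Set.Icc (0:ℝ) 1
  closed : ∀ u ∈ Set.Ioc (0:ℝ) 1, ∀ v ∈ C.V, ∀ z ∈ C.Vstar u v, (bnd v < u ↔ bnd z < u)
  consistent : ∀ u ∈ Set.Ioc (0:ℝ) 1, ∀ v ∈ C.V, ∀ z ∈ C.Vstar u v, bnd v < u →
    est u v = est u z
  nonneg : ∀ u ∈ Set.Ioc (0:ℝ) 1, ∀ v ∈ C.V, bnd v < u → 0 ≤ est u v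
  integrable : ∀ v ∈ C.V, IntegrableOn (fun u => est u v) (Set.Ioc (bnd v) 1)
  int_le : ∀ v ∈ C.V, 0 < bnd v → (∫ u in Set.Ioc (bnd v) 1, est u v) ≤ f v
  int_eq : ∀ v ∈ C.V, bnd v = 0 → (∫ u in Set.Ioc (0:ℝ) 1, est u v) = f v

section Stmt18Aux

variable {r : ℕ} (C : CoordScheme r) (f : (Fin r → ℝ) → ℝ)

lemma mem_Vstar_self {v : Fin r → ℝ} (hv : v ∈ C.V) (u : ℝ) : v ∈ C.Vstar u v :=
  ⟨hv, fun _ => ⟨fun _ => rfl, fun h => h⟩⟩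

lemma Vstar_mono {u x : ℝ} (hu : 0 < u) (hux : u ≤ x) (hx : x ≤ 1)
    {v z : Fin r → ℝ} (hz : z ∈ C.Vstar u v) : z ∈ C.Vstar x v := by
  obtain ⟨hzV, h⟩ := hz
  have hτ : ∀ i, C.τ i u ≤ C.τ i x := fun i =>
    C.τ_mono i ⟨hu.le, hux.trans hx⟩ ⟨hu.le.trans hux, hx⟩ hux
  refine ⟨hzV, fun i => ⟨fun hle => ?_, fun hlt => ?_⟩⟩
  · exact (h i).1 ((hτ i).trans hle)
  · rcases le_or_gt (C.τ i u) (v i) with h1 | h1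
    · rw [(h i).1 h1]; exact hlt
    · exact lt_of_lt_of_le ((h i).2 h1) (hτ i)

lemma Vstar_class_eq {u : ℝ} {v z : Fin r → ℝ} (hz : z ∈ C.Vstar u v) :
    C.Vstar u z = C.Vstar u v := by
  obtain ⟨hzV, h⟩ := hz
  have key : ∀ i, (C.τ i u ≤ v i ∧ z i = v i) ∨ (v i < C.τ i u ∧ z i < C.τ i u) := by
    intro i
    rcases le_or_gt (C.τ i u) (v i) with h1 | h1
    · exact Or.inl ⟨h1, (h i).1 h1⟩
    · exact Or.inr ⟨h1, (h i).2 h1⟩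
  ext w
  simp only [CoordScheme.Vstar, Set.mem_setOf_eq]
  constructor
  · rintro ⟨hwV, hw⟩
    refine ⟨hwV, fun i => ?_⟩
    rcases key i with ⟨h1, h2⟩ | ⟨h1, h2⟩
    · exact ⟨fun _ => ((hw i).1 (h2.symm ▸ h1 : C.τ i u ≤ z i)).trans h2,
        fun hlt => absurd (h1.trans_lt hlt) (lt_irrefl _)⟩
    · exact ⟨fun hle => absurd (hle.trans_lt h1) (lt_irrefl _), fun _ => (hw i).2 h2⟩
  · rintro ⟨hwV, hw⟩
    refine ⟨hwV, fun i => ?_⟩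
    rcases key i with ⟨h1, h2⟩ | ⟨h1, h2⟩
    · exact ⟨fun _ => ((hw i).1 h1).trans h2.symm,
        fun hlt => absurd h1 (not_le.mpr (h2 ▸ hlt))⟩
    · exact ⟨fun hle => absurd (hle.trans_lt h2) (lt_irrefl _), fun _ => (hw i).2 h1⟩

lemma lb_bddBelow (hf : ∀ v ∈ C.V, 0 ≤ f v) {u : ℝ} {v : Fin r → ℝ} : BddBelow (f '' C.Vstar u v) := by
  refine ⟨0, ?_⟩
  rintro y ⟨z, hz, rfl⟩
  exact hf z hz.1

lemma lb_nonneg (hf : ∀ v ∈ C.V, 0 ≤ f v) {u : ℝ} {v : Fin r → ℝ} (hv : v ∈ C.V) : 0 ≤ C.lb f u v := by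
  refine le_csInf ⟨f v, Set.mem_image_of_mem f (mem_Vstar_self C hv u)⟩ ?_
  rintro y ⟨z, hz, rfl⟩
  exact hf z hz.1

lemma lb_le (hf : ∀ v ∈ C.V, 0 ≤ f v) {u : ℝ} {v : Fin r → ℝ} (hv : v ∈ C.V) : C.lb f u v ≤ f v :=
  csInf_le (lb_bddBelow C f hf) (Set.mem_image_of_mem f (mem_Vstar_self C hv u))

lemma lb_anti (hf : ∀ v ∈ C.V, 0 ≤ f v) {u x : ℝ} {v : Fin r → ℝ} (hv : v ∈ C.V) (hu : 0 < u) (hux : u ≤ x)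
    (hx : x ≤ 1) : C.lb f x v ≤ C.lb f u v :=
  csInf_le_csInf (lb_bddBelow C f hf)
    ⟨f v, Set.mem_image_of_mem f (mem_Vstar_self C hv u)⟩
    (Set.image_mono (fun _ hz => Vstar_mono C hu hux hx hz))

lemma lb_class_eq {u : ℝ} {v z : Fin r → ℝ} (hz : z ∈ C.Vstar u v) :
    C.lb f u z = C.lb f u v := by
  unfold CoordScheme.lb
  rw [Vstar_class_eq C hz]

variable (P : PartialSpec C f)

lemma bnd_eq {u : ℝ} {v z : Fin r → ℝ} (hu : u ∈ Set.Ioc (0:ℝ) 1) (hv : v ∈ C.V)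
    (hz : z ∈ C.Vstar u v) (hub : u ≤ P.bnd v) : P.bnd z = P.bnd v := by
  have hzV : z ∈ C.V := hz.1
  have hb1 : P.bnd v ≤ 1 := (P.bnd_mem v hv).2
  have h1 : P.bnd v ≤ P.bnd z := by
    by_contra h
    push_neg at h
    have hmem : P.bnd v ∈ Set.Ioc (0:ℝ) 1 := ⟨hu.1.trans_le hub, hb1⟩
    have hcl := P.closed (P.bnd v) hmem v hv z (Vstar_mono C hu.1 hub hb1 hz)
    exact absurd (hcl.mpr h) (lt_irrefl _)
  have h2 : P.bnd z ≤ P.bnd v := by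
    by_contra h
    push_neg at h
    have hbz1 : P.bnd z ≤ 1 := (P.bnd_mem z hzV).2
    have hmem : P.bnd z ∈ Set.Ioc (0:ℝ) 1 := ⟨hu.1.trans_le (hub.trans h.le), hbz1⟩
    have hcl := P.closed (P.bnd z) hmem v hv z (Vstar_mono C hu.1 (hub.trans h.le) hbz1 hz)
    exact absurd (hcl.mp h) (lt_irrefl _)
  exact le_antisymm h2 h1

/-- `∫_{ρ_v}^1 est(·,v)`. -/
def pI0 (v : Fin r → ℝ) : ℝ := ∫ u in Set.Ioc (P.bnd v) 1, P.est u v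

lemma pI0_eq {u : ℝ} {v z : Fin r → ℝ} (hu : u ∈ Set.Ioc (0:ℝ) 1) (hv : v ∈ C.V)
    (hz : z ∈ C.Vstar u v) (hub : u ≤ P.bnd v) : pI0 C f P z = pI0 C f P v := by
  have hb := bnd_eq C f P hu hv hz hub
  unfold pI0
  rw [hb]
  refine MeasureTheory.setIntegral_congr_fun measurableSet_Ioc (fun x hx => ?_)
  exact (P.consistent x ⟨hu.1.trans_le (hub.trans hx.1.le), hx.2⟩ v hv z
    (Vstar_mono C hu.1 (hub.trans hx.1.le) hx.2 hz) hx.1).symm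

/-- `a_n = ρ_v 2^{-n}`. -/
def pa (v : Fin r → ℝ) (n : ℕ) : ℝ := P.bnd v * 2 ^ (-(n:ℤ))

lemma pa_zero (v : Fin r → ℝ) : pa C f P v 0 = P.bnd v := by simp [pa]

lemma pa_pos {v : Fin r → ℝ} (hρ : 0 < P.bnd v) (n : ℕ) : 0 < pa C f P v n :=
  mul_pos hρ (zpow_pos two_pos _)

lemma pa_anti {v : Fin r → ℝ} (hρ : 0 ≤ P.bnd v) : Antitone (pa C f P v) := by
  intro m n h
  unfold pa
  have : (2:ℝ) ^ (-(n:ℤ)) ≤ 2 ^ (-(m:ℤ)) := by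
    apply zpow_le_zpow_right₀ one_le_two
    omega
  exact mul_le_mul_of_nonneg_left this hρ

lemma pa_le_bnd {v : Fin r → ℝ} (hρ : 0 ≤ P.bnd v) (n : ℕ) : pa C f P v n ≤ P.bnd v := by
  rw [← pa_zero C f P v]
  exact pa_anti C f P hρ (Nat.zero_le n)

lemma pa_sub (v : Fin r → ℝ) (n : ℕ) :
    pa C f P v n - pa C f P v (n+1) = pa C f P v (n+1) := by
  have h : (2:ℝ) ^ (-(n:ℤ)) = 2 ^ (-((n:ℤ)+1)) * 2 := by
    rw [← zpow_add_one₀ (two_ne_zero)]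
    congr 1
    ring
  unfold pa
  push_cast
  rw [h]
  ring

lemma pa_tendsto (v : Fin r → ℝ) : Filter.Tendsto (pa C f P v) Filter.atTop (𝓝 0) := by
  have h : pa C f P v = fun n => P.bnd v * (1/2:ℝ) ^ n := by
    funext n
    unfold pa
    rw [one_div, ← zpow_natCast (2:ℝ)⁻¹, inv_zpow, ← zpow_neg]
  rw [h]
  have := (tendsto_pow_atTop_nhds_zero_of_lt_one (by norm_num : (0:ℝ) ≤ 1/2)
    (by norm_num : (1/2:ℝ) < 1)).const_mul (P.bnd v)
  simpa using this

/-- The dyadic index of `u` in `(0, ρ_v]`. -/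
def jdx (v : Fin r → ℝ) (u : ℝ) : ℕ := ⌊Real.logb 2 (P.bnd v / u)⌋₊

lemma jdx_cover {v : Fin r → ℝ} {u : ℝ} (hu : u ∈ Set.Ioc (0:ℝ) (P.bnd v)) :
    u ∈ Set.Ioc (pa C f P v (jdx C f P v u + 1)) (pa C f P v (jdx C f P v u)) := by
  have hρ : 0 < P.bnd v := hu.1.trans_le hu.2
  set x : ℝ := P.bnd v / u with hxdef
  have hx0 : 0 < x := div_pos hρ hu.1
  have hx1 : 1 ≤ x := (one_le_div hu.1).mpr hu.2
  set j : ℕ := jdx C f P v u with hj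
  have hlog0 : 0 ≤ Real.logb 2 x := Real.logb_nonneg one_lt_two hx1
  have h1 : (j:ℝ) ≤ Real.logb 2 x := Nat.floor_le hlog0
  have h2 : Real.logb 2 x < (j:ℝ) + 1 := Nat.lt_floor_add_one _
  have hb2 : (1:ℝ) < 2 := one_lt_two
  have hlow : (2:ℝ) ^ (j:ℕ) ≤ x := by
    calc (2:ℝ) ^ (j:ℕ) = (2:ℝ) ^ ((j:ℕ):ℝ) := (Real.rpow_natCast 2 j).symm
    _ ≤ (2:ℝ) ^ (Real.logb 2 x) := (Real.rpow_le_rpow_left_iff hb2).mpr h1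
    _ = x := Real.rpow_logb two_pos (by norm_num) hx0
  have hhigh : x < (2:ℝ) ^ (j+1:ℕ) := by
    calc x = (2:ℝ) ^ (Real.logb 2 x) := (Real.rpow_logb two_pos (by norm_num) hx0).symm
    _ < (2:ℝ) ^ (((j:ℝ)+1)) := (Real.rpow_lt_rpow_left_iff hb2).mpr h2
    _ = (2:ℝ) ^ (j+1:ℕ) := by rw [← Real.rpow_natCast 2 (j+1)]; norm_num
  constructor
  · -- pa (j+1) < u
    have h3 : P.bnd v < 2 ^ (j+1:ℕ) * u := by
      have := (div_lt_iff₀ hu.1).mp hhigh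
      linarith
    have : pa C f P v (j+1) = P.bnd v / 2 ^ (j+1:ℕ) := by
      unfold pa
      rw [zpow_neg, zpow_natCast]
      ring
    rw [this, div_lt_iff₀ (pow_pos two_pos _)]
    linarith
  · -- u ≤ pa j
    have h3 : 2 ^ (j:ℕ) * u ≤ P.bnd v := by
      have := (le_div_iff₀ hu.1).mp hlow
      linarith
    have : pa C f P v j = P.bnd v / 2 ^ (j:ℕ) := by
      unfold pa
      rw [zpow_neg, zpow_natCast]
      ring
    rw [this, le_div_iff₀ (pow_pos two_pos _)]
    linarith

lemma jdx_eq {v : Fin r → ℝ} {u : ℝ} (hρ : 0 < P.bnd v) {j : ℕ}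
    (hu : u ∈ Set.Ioc (pa C f P v (j+1)) (pa C f P v j)) : jdx C f P v u = j := by
  have hu0 : 0 < u := (pa_pos C f P hρ (j+1)).trans hu.1
  have huρ : u ≤ P.bnd v := hu.2.trans (pa_le_bnd C f P hρ.le j)
  have hc := jdx_cover C f P (v := v) ⟨hu0, huρ⟩
  set k : ℕ := jdx C f P v u with hk
  rcases lt_trichotomy k j with h | h | h
  · exfalso
    have : pa C f P v j ≤ pa C f P v (k+1) := pa_anti C f P hρ.le (by omega)
    exact absurd (hu.2.trans this) (not_le.mpr hc.1)
  · exact h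
  · exfalso
    have : pa C f P v k ≤ pa C f P v (j+1) := pa_anti C f P hρ.le (by omega)
    exact absurd (hc.2.trans this) (not_le.mpr hu.1)

/-- Increment of the cumulative integral over the `j`-th dyadic interval. -/
def pD (v : Fin r → ℝ) (j : ℕ) : ℝ :=
  C.lb f (pa C f P v j) v - (if j = 0 then pI0 C f P v else C.lb f (pa C f P v (j-1)) v)

/-- Value of the extension on the `j`-th dyadic interval. -/
def pVal (v : Fin r → ℝ) (j : ℕ) : ℝ := pD C f P v j / pa C f P v (j+1)

/-- The extension of the partially specified estimator. -/
def pg (u : ℝ) (v : Fin r → ℝ) : ℝ :=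
  if P.bnd v < u then P.est u v else pVal C f P v (jdx C f P v u)

end Stmt18Aux

section Stmt18Aux2

variable {r : ℕ} (C : CoordScheme r) (f : (Fin r → ℝ) → ℝ) (P : PartialSpec C f)

lemma pI0_le_lb {v : Fin r → ℝ} (hv : v ∈ C.V) (hρ : 0 < P.bnd v) :
    pI0 C f P v ≤ C.lb f (P.bnd v) v := by
  refine le_csInf ⟨f v, Set.mem_image_of_mem f (mem_Vstar_self C hv _)⟩ ?_
  rintro y ⟨z, hz, rfl⟩
  have hρmem : P.bnd v ∈ Set.Ioc (0:ℝ) 1 := ⟨hρ, (P.bnd_mem v hv).2⟩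
  have hbz := bnd_eq C f P hρmem hv hz le_rfl
  calc pI0 C f P v = pI0 C f P z := (pI0_eq C f P hρmem hv hz le_rfl).symm
  _ ≤ f z := by
      have := P.int_le z hz.1 (by rw [hbz]; exact hρ)
      exact this

lemma pD_nonneg (hf : ∀ v ∈ C.V, 0 ≤ f v) {v : Fin r → ℝ} (hv : v ∈ C.V)
    (hρ : 0 < P.bnd v) (j : ℕ) : 0 ≤ pD C f P v j := by
  have hb1 : P.bnd v ≤ 1 := (P.bnd_mem v hv).2
  cases j with
  | zero =>
    have := pI0_le_lb C f P hv hρ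
    unfold pD
    rw [if_pos rfl, pa_zero]
    linarith
  | succ k =>
    have h1 : C.lb f (pa C f P v k) v ≤ C.lb f (pa C f P v (k+1)) v :=
      lb_anti C f hf hv (pa_pos C f P hρ (k+1)) (pa_anti C f P hρ.le (Nat.le_succ k))
        ((pa_le_bnd C f P hρ.le k).trans hb1)
    unfold pD
    rw [if_neg (Nat.succ_ne_zero k)]
    simp only [Nat.succ_sub_one]
    linarith

lemma pVal_nonneg (hf : ∀ v ∈ C.V, 0 ≤ f v) {v : Fin r → ℝ} (hv : v ∈ C.V)
    (hρ : 0 < P.bnd v) (j : ℕ) : 0 ≤ pVal C f P v j :=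
  div_nonneg (pD_nonneg C f P hf hv hρ j) (pa_pos C f P hρ (j+1)).le

lemma pVal_eq {u : ℝ} {v z : Fin r → ℝ} (hu : u ∈ Set.Ioc (0:ℝ) 1) (hv : v ∈ C.V)
    (hz : z ∈ C.Vstar u v) (hub : u ≤ P.bnd v) {j : ℕ} (hj : u ≤ pa C f P v j) :
    pVal C f P z j = pVal C f P v j := by
  have hbz := bnd_eq C f P hu hv hz hub
  have hb1 : P.bnd v ≤ 1 := (P.bnd_mem v hv).2
  have hρ : 0 < P.bnd v := hu.1.trans_le hub
  have hpa : ∀ k, pa C f P z k = pa C f P v k := by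
    intro k; unfold pa; rw [hbz]
  have hlbk : ∀ k, u ≤ pa C f P v k → C.lb f (pa C f P v k) z = C.lb f (pa C f P v k) v := by
    intro k hk
    exact lb_class_eq C f
      (Vstar_mono C hu.1 hk ((pa_le_bnd C f P hρ.le k).trans hb1) hz)
  cases j with
  | zero =>
    simp only [pVal, pD, if_pos rfl, hpa, hlbk 0 hj, pI0_eq C f P hu hv hz hub]
  | succ k =>
    have hk : u ≤ pa C f P v k := hj.trans (pa_anti C f P hρ.le (Nat.le_succ k))
    simp only [pVal, pD, if_neg (Nat.succ_ne_zero k), Nat.succ_sub_one, hpa,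
      hlbk (k+1) hj, hlbk k hk]

lemma key_lemma (hf : ∀ v ∈ C.V, 0 ≤ f v)
    (hlim : ∀ v ∈ C.V,
      Filter.Tendsto (fun u => C.lb f u v) (𝓝[>] (0:ℝ)) (𝓝 (f v)))
    {v : Fin r → ℝ} (hv : v ∈ C.V) (hρ : 0 < P.bnd v) :
    MeasureTheory.IntegrableOn (fun u => pg C f P u v) (Set.Ioc 0 (P.bnd v)) ∧
      (∫ u in Set.Ioc (0:ℝ) (P.bnd v), pg C f P u v) = f v - pI0 C f P v := by
  set ρ := P.bnd v with hρdef
  set G : ℝ → ℝ := fun u => pg C f P u v with hGdef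
  set a : ℕ → ℝ := pa C f P v with hadef
  have hb1 : ρ ≤ 1 := (P.bnd_mem v hv).2
  have hpiece : ∀ j : ℕ, Set.EqOn G (fun _ => pVal C f P v j)
      (Set.Ioc (a (j+1)) (a j)) := by
    intro j u hu
    have h1 : ¬ ρ < u := not_lt.mpr (hu.2.trans (pa_le_bnd C f P (le_of_lt hρ) j))
    show pg C f P u v = pVal C f P v j
    unfold pg
    rw [if_neg h1, jdx_eq C f P hρ hu]
  have hGnn : ∀ u ∈ Set.Ioc (0:ℝ) ρ, 0 ≤ G u := by
    intro u hu
    have h1 : ¬ ρ < u := not_lt.mpr hu.2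
    show 0 ≤ pg C f P u v
    unfold pg
    rw [if_neg h1]
    exact pVal_nonneg C f P hf hv hρ _
  have hintp : ∀ j : ℕ, MeasureTheory.IntegrableOn G (Set.Ioc (a (j+1)) (a j)) := by
    intro j
    exact (MeasureTheory.integrableOn_const
      measure_Ioc_lt_top.ne).congr_fun (hpiece j).symm measurableSet_Ioc
  have hvalp : ∀ j : ℕ, (∫ u in Set.Ioc (a (j+1)) (a j), G u) = pD C f P v j := by
    intro j
    rw [MeasureTheory.setIntegral_congr_fun measurableSet_Ioc (hpiece j),
      MeasureTheory.setIntegral_const, MeasureTheory.measureReal_def, Real.volume_Ioc,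
      ENNReal.toReal_ofReal (by linarith [pa_sub C f P v j, pa_pos C f P hρ (j+1)] : (0:ℝ) ≤ a j - a (j+1)),
      pa_sub C f P v j, smul_eq_mul]
    unfold pVal
    rw [mul_comm, div_mul_cancel₀ _ (pa_pos C f P hρ (j+1)).ne']
  have hunion : ∀ n : ℕ, Set.Ioc (a (n+1)) ρ = Set.Ioc (a (n+1)) (a n) ∪ Set.Ioc (a n) ρ := by
    intro n
    exact (Set.Ioc_union_Ioc_eq_Ioc (pa_anti C f P hρ.le (Nat.le_succ n))
      (pa_le_bnd C f P hρ.le n)).symm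
  have hint : ∀ n : ℕ, MeasureTheory.IntegrableOn G (Set.Ioc (a n) ρ) := by
    intro n
    induction n with
    | zero =>
      have : a 0 = ρ := pa_zero C f P v
      rw [this, Set.Ioc_self]
      exact MeasureTheory.integrableOn_empty
    | succ n ih =>
      rw [hunion n]
      exact (hintp n).union ih
  have hΦ : ∀ n : ℕ, (∫ u in Set.Ioc (a (n+1)) ρ, G u) = C.lb f (a n) v - pI0 C f P v := by
    intro n
    induction n with
    | zero =>
      rw [hunion 0, MeasureTheory.setIntegral_union (Set.Ioc_disjoint_Ioc_of_le le_rfl)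
        measurableSet_Ioc (hintp 0) (hint 0), hvalp 0]
      have h0 : a 0 = ρ := pa_zero C f P v
      rw [h0, Set.Ioc_self]
      simp only [MeasureTheory.setIntegral_empty, add_zero]
      unfold pD
      rw [if_pos rfl, pa_zero, ← hρdef]
    | succ n ih =>
      rw [hunion (n+1), MeasureTheory.setIntegral_union (Set.Ioc_disjoint_Ioc_of_le le_rfl)
        measurableSet_Ioc (hintp (n+1)) (hint (n+1)), hvalp (n+1), ih]
      unfold pD
      rw [if_neg (Nat.succ_ne_zero n)]
      simp only [Nat.succ_sub_one, ← hadef]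
      ring
  have hnorm : ∀ n : ℕ, (∫ u in Set.Ioc (a n) ρ, ‖G u‖) ≤ f v - pI0 C f P v := by
    intro n
    have hIle : pI0 C f P v ≤ f v :=
      (pI0_le_lb C f P hv hρ).trans (lb_le C f hf hv)
    have heq : (∫ u in Set.Ioc (a n) ρ, ‖G u‖) = ∫ u in Set.Ioc (a n) ρ, G u := by
      refine MeasureTheory.setIntegral_congr_fun measurableSet_Ioc (fun u hu => ?_)
      exact Real.norm_of_nonneg (hGnn u ⟨(pa_pos C f P hρ n).trans hu.1, hu.2⟩)
    rw [heq]
    cases n with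
    | zero =>
      rw [show a 0 = ρ from pa_zero C f P v, Set.Ioc_self,
        MeasureTheory.setIntegral_empty]
      linarith
    | succ n =>
      rw [hΦ n]
      have := lb_le C f hf hv (u := a n)
      linarith
  have hIntOn : MeasureTheory.IntegrableOn G (Set.Ioc (0:ℝ) ρ) :=
    MeasureTheory.integrableOn_Ioc_of_intervalIntegral_norm_bounded_left
      hint (pa_tendsto C f P v) (Filter.Eventually.of_forall hnorm)
  refine ⟨hIntOn, ?_⟩
  have hmono : Monotone (fun n => Set.Ioc (a n) ρ) := fun m n h =>
    Set.Ioc_subset_Ioc_left (pa_anti C f P hρ.le h)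
  have hU : (⋃ n, Set.Ioc (a n) ρ) = Set.Ioc (0:ℝ) ρ := by
    ext u
    simp only [Set.mem_iUnion, Set.mem_Ioc]
    constructor
    · rintro ⟨n, hn1, hn2⟩
      exact ⟨(pa_pos C f P hρ n).trans hn1, hn2⟩
    · rintro ⟨h1, h2⟩
      obtain ⟨n, hn⟩ := ((pa_tendsto C f P v).eventually_lt_const h1).exists
      exact ⟨n, hn, h2⟩
  have htend1 : Filter.Tendsto (fun n => ∫ u in Set.Ioc (a n) ρ, G u) Filter.atTop
      (𝓝 (∫ u in Set.Ioc (0:ℝ) ρ, G u)) := by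
    have := MeasureTheory.tendsto_setIntegral_of_monotone
      (fun n => measurableSet_Ioc) hmono (hU ▸ hIntOn)
    rwa [hU] at this
  have htend2 : Filter.Tendsto (fun n => ∫ u in Set.Ioc (a (n+1)) ρ, G u) Filter.atTop
      (𝓝 (∫ u in Set.Ioc (0:ℝ) ρ, G u)) :=
    htend1.comp (Filter.tendsto_add_atTop_nat 1)
  have hapos : ∀ n, a n ∈ Set.Ioi (0:ℝ) := fun n => pa_pos C f P hρ n
  have hain : Filter.Tendsto a Filter.atTop (𝓝[>] (0:ℝ)) :=
    tendsto_nhdsWithin_of_tendsto_nhds_of_eventually_within a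
      (pa_tendsto C f P v) (Filter.Eventually.of_forall hapos)
  have htend3 : Filter.Tendsto (fun n => C.lb f (a n) v - pI0 C f P v) Filter.atTop
      (𝓝 (f v - pI0 C f P v)) :=
    ((hlim v hv).comp hain).sub_const _
  have heqfun : (fun n => ∫ u in Set.Ioc (a (n+1)) ρ, G u)
      = fun n => C.lb f (a n) v - pI0 C f P v := funext hΦ
  rw [heqfun] at htend2
  exact tendsto_nhds_unique htend2 htend3

end Stmt18Aux2

/-- if `lim_{u→0⁺} f̲⁽ᵛ⁾(u) = f(v)` for all `v ∈ V`, then every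
partially specified estimator extends to a nonnegative unbiased estimator of `f`
agreeing with it wherever it is specified. -/
theorem stmt18 {r : ℕ} (C : CoordScheme r) (f : (Fin r → ℝ) → ℝ)
    (hf : ∀ v ∈ C.V, 0 ≤ f v)
    (hlim : ∀ v ∈ C.V,
      Filter.Tendsto (fun u => C.lb f u v) (𝓝[>] (0:ℝ)) (𝓝 (f v)))
    (P : PartialSpec C f) :
    ∃ g : ℝ → (Fin r → ℝ) → ℝ,
      C.IsEstimator g ∧ C.Nonneg g ∧ C.Unbiased f g ∧
      ∀ v ∈ C.V, ∀ u ∈ Set.Ioc (0:ℝ) 1, P.bnd v < u → g u v = P.est u v := by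
  refine ⟨pg C f P, ⟨?_, ?_⟩, ?_, ?_, ?_⟩
  · -- integrable
    intro v hv
    rcases (P.bnd_mem v hv).1.eq_or_lt with h0 | hρ
    · have heq : Set.EqOn (fun u => P.est u v) (fun u => pg C f P u v) (Set.Ioc (0:ℝ) 1) := by
        intro u hu
        have : P.bnd v < u := by rw [← h0]; exact hu.1
        simp only [pg, if_pos this]
      have hi := P.integrable v hv
      rw [← h0] at hi
      exact hi.congr_fun heq measurableSet_Ioc
    · have hb1 : P.bnd v ≤ 1 := (P.bnd_mem v hv).2
      have h1 := (key_lemma C f P hf hlim hv hρ).1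
      have heq : Set.EqOn (fun u => P.est u v) (fun u => pg C f P u v)
          (Set.Ioc (P.bnd v) 1) := by
        intro u hu
        simp only [pg, if_pos hu.1]
      have h2 := (P.integrable v hv).congr_fun heq measurableSet_Ioc
      have := h1.union h2
      rwa [Set.Ioc_union_Ioc_eq_Ioc hρ.le hb1] at this
  · -- consistent
    intro u hu v hv z hz
    by_cases h : P.bnd v < u
    · have hz' := (P.closed u hu v hv z hz).mp h
      simp only [pg, if_pos h, if_pos hz']
      exact P.consistent u hu v hv z hz h
    · push_neg at h
      have hbz := bnd_eq C f P hu hv hz h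
      have hz' : ¬ P.bnd z < u := by rw [hbz]; exact not_lt.mpr h
      simp only [pg, if_neg (not_lt.mpr h), if_neg hz']
      have hjd : jdx C f P z u = jdx C f P v u := by unfold jdx; rw [hbz]
      rw [hjd]
      exact (pVal_eq C f P hu hv hz h (jdx_cover C f P ⟨hu.1, h⟩).2).symm
  · -- nonneg
    intro u hu v hv
    by_cases h : P.bnd v < u
    · simp only [pg, if_pos h]
      exact P.nonneg u hu v hv h
    · push_neg at h
      simp only [pg, if_neg (not_lt.mpr h)]
      exact pVal_nonneg C f P hf hv (hu.1.trans_le h) _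
  · -- unbiased
    intro v hv
    rcases (P.bnd_mem v hv).1.eq_or_lt with h0 | hρ
    · have heq : Set.EqOn (fun u => pg C f P u v) (fun u => P.est u v) (Set.Ioc (0:ℝ) 1) := by
        intro u hu
        have : P.bnd v < u := by rw [← h0]; exact hu.1
        simp only [pg, if_pos this]
      rw [MeasureTheory.setIntegral_congr_fun measurableSet_Ioc heq]
      exact P.int_eq v hv h0.symm
    · have hb1 : P.bnd v ≤ 1 := (P.bnd_mem v hv).2
      obtain ⟨hint1, hval1⟩ := key_lemma C f P hf hlim hv hρ
      have heq : Set.EqOn (fun u => pg C f P u v) (fun u => P.est u v)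
          (Set.Ioc (P.bnd v) 1) := by
        intro u hu
        simp only [pg, if_pos hu.1]
      have hint2 : MeasureTheory.IntegrableOn (fun u => pg C f P u v)
          (Set.Ioc (P.bnd v) 1) :=
        (P.integrable v hv).congr_fun heq.symm measurableSet_Ioc
      rw [← Set.Ioc_union_Ioc_eq_Ioc hρ.le hb1,
        MeasureTheory.setIntegral_union (Set.Ioc_disjoint_Ioc_of_le le_rfl) measurableSet_Ioc
          hint1 hint2, hval1, MeasureTheory.setIntegral_congr_fun measurableSet_Ioc heq]
      show f v - pI0 C f P v + pI0 C f P v = f v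
      ring
  · -- agreement
    intro v hv u hu h
    simp only [pg, if_pos h]
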